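/- Let x : ℝ → ℝ^n be a continuous curve, W : ℝ^n → ℝ, N1, N2 : ℝ^n → ℝ continuous nonnegative functions, γ > 0, and let E := { y ∈ ℝ^n : N1(y) = 0 and N2(y) = 0 } be nonempty. Suppose for every t ≥ 0 the map t ↦ W(x(t)) is differentiable with (d/dt)W(x(t)) ≤ -γ·(N1(x(t)) + N2(x(t))), W(x(t)) ≥ 0 for all t ≥ 0, and there exist T_U ≥ 0 and c > 0 such that N1(x(t)) + N2(x(t)) ≥ c·dist(x(t), E)² for all t ≥ T_U. Let W∞ := lim_{t→∞} W(x(t)) and K := sqrt((W(x(0)) - W∞)/(γ·c)). Then for every T ≥ T_U with T > 0: (i) ∫_T^{2T} dist(x(t), E)² dt ≤ K², and (ii) there exists τ ∈ [T, 2T] with dist(x(τ), E) ≤ K/√T. -/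

import Mathlib

open Filter MeasureTheory

theorem stmt_9 {n : ℕ} (x : ℝ → EuclideanSpace ℝ (Fin n)) (hx : Continuous x)
    (W N1 N2 : EuclideanSpace ℝ (Fin n) → ℝ)
    (hN1c : Continuous N1) (hN2c : Continuous N2)
    (hN1 : ∀ y, 0 ≤ N1 y) (hN2 : ∀ y, 0 ≤ N2 y)
    (γ : ℝ) (hγ : 0 < γ)
    (E : Set (EuclideanSpace ℝ (Fin n)))
    (hE : E = {y | N1 y = 0 ∧ N2 y = 0})
    (hEne : E.Nonempty)
    (w' : ℝ → ℝ)
    (hd : ∀ t, 0 ≤ t → HasDerivAt (fun s => W (x s)) (w' t) t)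
    (hineq : ∀ t, 0 ≤ t → w' t ≤ -γ * (N1 (x t) + N2 (x t)))
    (hWnn : ∀ t, 0 ≤ t → 0 ≤ W (x t))
    (TU : ℝ) (hTU : 0 ≤ TU) (c : ℝ) (hc : 0 < c)
    (heb : ∀ t, TU ≤ t → c * Metric.infDist (x t) E ^ 2 ≤ N1 (x t) + N2 (x t))
    (Winf : ℝ)
    (hWinf : Tendsto (fun t => W (x t)) atTop (nhds Winf))
    (K : ℝ) (hK : K = Real.sqrt ((W (x 0) - Winf) / (γ * c))) :
    ∀ T : ℝ, TU ≤ T → 0 < T →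
      (∫ t in Set.Icc T (2 * T), Metric.infDist (x t) E ^ 2 ≤ K ^ 2) ∧
      ∃ τ ∈ Set.Icc T (2 * T), Metric.infDist (x τ) E ≤ K / Real.sqrt T := by
  intro T hT hT0
  have hTT : T ≤ 2 * T := by linarith
  set f : ℝ → ℝ := fun t => W (x t) with hf
  set g : ℝ → ℝ := fun t => Metric.infDist (x t) E ^ 2 with hg
  have hdcont : Continuous (fun t => Metric.infDist (x t) E) :=
    (Metric.continuous_infDist_pt E).comp hx
  have hgcont : Continuous g := hdcont.pow 2
  set h : ℝ → ℝ := fun t => γ * c * g t with hh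
  have hhcont : Continuous h := continuous_const.mul hgcont
  -- f antitone on [0, ∞)
  have hanti : AntitoneOn f (Set.Ici 0) := by
    apply antitoneOn_of_deriv_nonpos (convex_Ici 0)
    · exact fun t ht => (hd t ht).continuousAt.continuousWithinAt
    · intro t ht
      rw [interior_Ici] at ht
      exact (hd t ht.le).differentiableAt.differentiableWithinAt
    · intro t ht
      rw [interior_Ici] at ht
      rw [(hd t ht.le).deriv]
      have h1 := hineq t ht.le
      nlinarith [hN1 (x t), hN2 (x t)]
  have hWinfle : ∀ s, 0 ≤ s → Winf ≤ f s := by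
    intro s hs
    refine le_of_tendsto hWinf ?_
    filter_upwards [eventually_ge_atTop s] with t ht
    exact hanti hs (hs.trans ht) ht
  have h0T : (0:ℝ) ≤ T := hTU.trans hT
  have hsub : 0 ≤ f 0 - Winf := by have := hWinfle 0 le_rfl; linarith
  have hWnonneg : 0 ≤ (f 0 - Winf) / (γ * c) := by positivity
  have hK2 : K ^ 2 = (f 0 - Winf) / (γ * c) := by
    rw [hK, Real.sq_sqrt hWnonneg]
  have hK0 : 0 ≤ K := by rw [hK]; exact Real.sqrt_nonneg _
  -- key integral bound
  set H : ℝ → ℝ := fun u => ∫ s in T..u, h s with hH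
  have hHd : ∀ u, HasDerivAt H (h u) u := by
    intro u
    exact intervalIntegral.integral_hasDerivAt_right (hhcont.intervalIntegrable T u)
      hhcont.aestronglyMeasurable.stronglyMeasurableAtFilter hhcont.continuousAt
  have hFanti : AntitoneOn (fun u => f u + H u) (Set.Icc T (2 * T)) := by
    apply antitoneOn_of_deriv_nonpos (convex_Icc _ _)
    · intro u hu
      exact ((hd u (h0T.trans hu.1)).continuousAt.add
        (hHd u).continuousAt).continuousWithinAt
    · intro u hu
      rw [interior_Icc] at hu
      exact ((hd u (h0T.trans hu.1.le)).add (hHd u)).differentiableAt.differentiableWithinAt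
    · intro u hu
      rw [interior_Icc] at hu
      have hu0 : (0:ℝ) ≤ u := h0T.trans hu.1.le
      have hder : deriv (fun u => f u + H u) u = w' u + h u := ((hd u hu0).add (hHd u)).deriv
      rw [hder]
      have h1 := hineq u hu0
      have h2 := heb u (hT.trans hu.1.le)
      simp only [hh, hg]
      nlinarith
  have hkey : f (2 * T) + H (2 * T) ≤ f T + H T :=
    hFanti ⟨le_rfl, hTT⟩ ⟨hTT, le_rfl⟩ hTT
  have hHT : H T = 0 := intervalIntegral.integral_same
  have hfT : f T ≤ f 0 := hanti (Set.mem_Ici.mpr le_rfl) (Set.mem_Ici.mpr h0T) h0T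
  have hf2T : Winf ≤ f (2 * T) := hWinfle _ (by linarith)
  have hintg : ∫ t in T..(2 * T), h t ≤ f 0 - Winf := by
    have : H (2 * T) ≤ f T - f (2 * T) := by linarith [hkey, hHT]
    calc ∫ t in T..(2 * T), h t = H (2 * T) := rfl
    _ ≤ f T - f (2 * T) := this
    _ ≤ f 0 - Winf := by linarith
  have hhg : ∫ t in T..(2 * T), h t = γ * c * ∫ t in T..(2 * T), g t := by
    simp only [hh]
    exact intervalIntegral.integral_const_mul _ _
  have hgIcc : ∫ t in Set.Icc T (2 * T), g t = ∫ t in T..(2 * T), g t := by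
    rw [intervalIntegral.integral_of_le hTT, MeasureTheory.integral_Icc_eq_integral_Ioc]
  have part1 : ∫ t in Set.Icc T (2 * T), g t ≤ K ^ 2 := by
    rw [hgIcc, hK2]
    rw [le_div_iff₀ (by positivity)]
    calc (∫ t in T..(2 * T), g t) * (γ * c) = γ * c * ∫ t in T..(2 * T), g t := by ring
    _ = ∫ t in T..(2 * T), h t := hhg.symm
    _ ≤ f 0 - Winf := hintg
  refine ⟨part1, ?_⟩
  -- part (ii)
  by_contra hcon
  push_neg at hcon
  obtain ⟨τ0, hτ0mem, hτ0min⟩ := isCompact_Icc.exists_isMinOn (Set.nonempty_Icc.mpr hTT)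
    hdcont.continuousOn
  set m : ℝ := Metric.infDist (x τ0) E with hm
  have hm0 : 0 ≤ m := Metric.infDist_nonneg
  have hmgt : K / Real.sqrt T < m := hcon τ0 hτ0mem
  have hlow : ∀ t ∈ Set.Icc T (2 * T), m ^ 2 ≤ g t := by
    intro t ht
    have hle : m ≤ Metric.infDist (x t) E := hτ0min ht
    simp only [hg]
    nlinarith [hle, hm0]
  have hTm : T * m ^ 2 ≤ ∫ t in Set.Icc T (2 * T), g t := by
    have hconst : ∫ _ in Set.Icc T (2 * T), m ^ 2 = T * m ^ 2 := by
      rw [MeasureTheory.setIntegral_const, Real.volume_real_Icc_of_le hTT, smul_eq_mul]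
      ring
    rw [← hconst]
    apply MeasureTheory.setIntegral_mono_on
    · exact (integrableOn_const_iff (by simp)).mpr (Or.inr (by rw [Real.volume_Icc]; exact ENNReal.ofReal_lt_top))
    · exact hgcont.integrableOn_Icc
    · exact measurableSet_Icc
    · exact hlow
  have hs : Real.sqrt T > 0 := Real.sqrt_pos.mpr hT0
  have hs2 : Real.sqrt T ^ 2 = T := Real.sq_sqrt hT0.le
  have hKlt : K < m * Real.sqrt T := by
    rw [div_lt_iff₀ hs] at hmgt; linarith
  have : K ^ 2 < T * m ^ 2 := by nlinarith
  linarith [part1, hTm]
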